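/- Let n ≥ 1, k ≥ 4, and let m_1,…,m_k, q_1,…,q_k be n×n permutation matrices with m_1 + ⋯ + m_k = q_1 + ⋯ + q_k. Suppose 0 ≤ l ≤ n − 2 and p is a near perfect matching with p ≤ m_1 + m_2 (entrywise) such that p and q_1 have exactly l common entries equal to 1. Then there exist an index j with 3 ≤ j ≤ k, permutation matrices m'_1, m'_2, m'_j, and a near perfect matching p' such that m_1 + m_2 + m_j = m'_1 + m'_2 + m'_j, p' ≤ m'_1 + m'_2 (entrywise), and p' and q_1 have exactly l + 1 common entries equal to 1. -/

import Mathlib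

/-- An `n × n` permutation matrix: a 0-1 matrix with exactly one `1` in each row and
each column. -/
def IsPermMatrix {n : ℕ} (M : Matrix (Fin n) (Fin n) ℕ) : Prop :=
  (∀ i j, M i j ≤ 1) ∧ (∀ i, ∑ j, M i j = 1) ∧ (∀ j, ∑ i, M i j = 1)

/-- A near perfect matching: a 0-1 matrix with at most one `1` in each row and each
column, and exactly `n - 1` entries equal to `1`. -/
def IsNearPerfectMatching {n : ℕ} (M : Matrix (Fin n) (Fin n) ℕ) : Prop :=
  (∀ i j, M i j ≤ 1) ∧ (∀ i, ∑ j, M i j ≤ 1) ∧ (∀ j, ∑ i, M i j ≤ 1) ∧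
    (∑ i, ∑ j, M i j) + 1 = n

/-- The number of common entries equal to `1` of two 0-1 matrices. -/
def commonOnes {n : ℕ} (p q : Matrix (Fin n) (Fin n) ℕ) : ℕ :=
  (Finset.univ.filter (fun ij : Fin n × Fin n => p ij.1 ij.2 = 1 ∧ q ij.1 ij.2 = 1)).card


open Finset

lemma exists_perm_of_hall {n : ℕ} (H : Matrix (Fin n) (Fin n) ℕ)
    (hcol : ∀ j, 2 ≤ ∑ i, H i j)
    (hrow : ∀ T : Finset (Fin n), ∑ i ∈ T, ∑ j, H i j ≤ 2 * T.card + 1) :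
    ∃ σ : Equiv.Perm (Fin n), ∀ j, 1 ≤ H (σ j) j := by
  classical
  set t : Fin n → Finset (Fin n) := fun j => univ.filter (fun i => 1 ≤ H i j) with ht
  have hall : ∀ S : Finset (Fin n), S.card ≤ (S.biUnion t).card := by
    intro S
    set T := S.biUnion t with hT
    have key : 2 * S.card ≤ ∑ j ∈ S, ∑ i, H i j := by
      calc 2 * S.card = ∑ _j ∈ S, 2 := by rw [Finset.sum_const]; ring
        _ ≤ ∑ j ∈ S, ∑ i, H i j := Finset.sum_le_sum (fun j _ => hcol j)
    have swap : ∑ j ∈ S, ∑ i, H i j = ∑ i, ∑ j ∈ S, H i j := Finset.sum_comm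
    have hout : ∀ i, i ∉ T → ∑ j ∈ S, H i j = 0 := by
      intro i hi
      apply Finset.sum_eq_zero
      intro j hj
      by_contra h
      exact hi (Finset.mem_biUnion.2 ⟨j, hj, by simp [ht]; omega⟩)
    have heq : ∑ i, ∑ j ∈ S, H i j = ∑ i ∈ T, ∑ j ∈ S, H i j := by
      rw [← Finset.sum_subset (Finset.subset_univ T)]
      intro i _ hi; exact hout i hi
    have hub : ∑ i ∈ T, ∑ j ∈ S, H i j ≤ ∑ i ∈ T, ∑ j, H i j :=
      Finset.sum_le_sum (fun i _ => Finset.sum_le_sum_of_subset (Finset.subset_univ S))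
    have := hrow T
    omega
  obtain ⟨f, hinj, hf⟩ := (Finset.all_card_le_biUnion_card_iff_exists_injective t).1 hall
  refine ⟨Equiv.ofBijective f (Finite.injective_iff_bijective.1 hinj), fun j => ?_⟩
  have := hf j
  simp [ht] at this
  exact this

def permMat {n : ℕ} (σ : Equiv.Perm (Fin n)) : Matrix (Fin n) (Fin n) ℕ :=
  fun i j => if i = σ j then 1 else 0

lemma permMat_isPerm {n : ℕ} (σ : Equiv.Perm (Fin n)) : IsPermMatrix (permMat σ) := by
  classical
  refine ⟨fun i j => by unfold permMat; split <;> omega, fun i => ?_, fun j => ?_⟩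
  · have h : ∀ j, permMat σ i j = if σ.symm i = j then 1 else 0 := by
      intro j
      unfold permMat
      by_cases h : i = σ j
      · simp [h]
      · rw [if_neg h, if_neg]
        intro hc
        exact h (by rw [← hc]; simp)
    rw [Finset.sum_congr rfl (fun j _ => h j)]
    simp
  · unfold permMat
    simp

lemma decompose2 {n : ℕ} (W : Matrix (Fin n) (Fin n) ℕ)
    (hr : ∀ i, ∑ j, W i j = 2) (hc : ∀ j, ∑ i, W i j = 2) :
    ∃ u v : Matrix (Fin n) (Fin n) ℕ, IsPermMatrix u ∧ IsPermMatrix v ∧ W = u + v := by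
  classical
  obtain ⟨σ, hσ⟩ := exists_perm_of_hall W (fun j => (hc j).ge)
    (fun T => by
      have : ∑ i ∈ T, ∑ j, W i j = 2 * T.card := by
        rw [Finset.sum_congr rfl (fun i _ => hr i), Finset.sum_const]; ring
      omega)
  set u := permMat σ with hu
  obtain ⟨hue, hur, huc⟩ := permMat_isPerm σ
  have hle : ∀ i j, u i j ≤ W i j := by
    intro i j
    by_cases h : i = σ j
    · subst h; simpa [hu, permMat] using hσ j
    · simp [hu, permMat, h]
  set v : Matrix (Fin n) (Fin n) ℕ := fun i j => W i j - u i j with hv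
  have hW : W = u + v := by
    funext i j
    show W i j = u i j + v i j
    simp only [Matrix.add_apply, hv]
    have := hle i j
    omega
  have hvadd : ∀ i j, v i j + u i j = W i j := fun i j => by
    have := hle i j; simp [hv]; omega
  have hvr : ∀ i, ∑ j, v i j = 1 := by
    intro i
    have h2 : ∑ j, (v i j + u i j) = 2 := by
      rw [Finset.sum_congr rfl (fun j _ => hvadd i j)]; exact hr i
    rw [Finset.sum_add_distrib, hur i] at h2
    omega
  have hvc : ∀ j, ∑ i, v i j = 1 := by
    intro j
    have h2 : ∑ i, (v i j + u i j) = 2 := by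
      rw [Finset.sum_congr rfl (fun i _ => hvadd i j)]; exact hc j
    rw [Finset.sum_add_distrib, huc j] at h2
    omega
  refine ⟨u, v, ⟨hue, hur, huc⟩, ⟨fun i j => ?_, hvr, hvc⟩, hW⟩
  calc v i j ≤ ∑ j', v i j' := Finset.single_le_sum (fun _ _ => Nat.zero_le _) (mem_univ j)
    _ = 1 := hvr i

/-- the exchange lemma for sums of permutation matrices
(Lemma about near perfect matchings). -/
theorem stmt16 (n k l : ℕ) (hn : 1 ≤ n) (hk : 4 ≤ k) (hl : l + 2 ≤ n)
    (m q : Fin k → Matrix (Fin n) (Fin n) ℕ)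
    (hm : ∀ i, IsPermMatrix (m i)) (hq : ∀ i, IsPermMatrix (q i))
    (hsum : ∑ i, m i = ∑ i, q i)
    (p : Matrix (Fin n) (Fin n) ℕ) (hp : IsNearPerfectMatching p)
    (hple : ∀ i j, p i j ≤ (m ⟨0, by omega⟩ + m ⟨1, by omega⟩) i j)
    (hcommon : commonOnes p (q ⟨0, by omega⟩) = l) :
    ∃ jj : Fin k, 2 ≤ (jj : ℕ) ∧
      ∃ m1' m2' mj' p' : Matrix (Fin n) (Fin n) ℕ,
        IsPermMatrix m1' ∧ IsPermMatrix m2' ∧ IsPermMatrix mj' ∧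
        IsNearPerfectMatching p' ∧
        m ⟨0, by omega⟩ + m ⟨1, by omega⟩ + m jj = m1' + m2' + mj' ∧
        (∀ i j, p' i j ≤ (m1' + m2') i j) ∧
        commonOnes p' (q ⟨0, by omega⟩) = l + 1 := by
  classical
  obtain ⟨pe, pr, pc, ptot⟩ := hp
  have h0k : 0 < k := by omega
  have h1k : 1 < k := by omega
  obtain ⟨q0e, q0r, q0c⟩ := hq ⟨0, h0k⟩
  set q0 : Matrix (Fin n) (Fin n) ℕ := q ⟨0, h0k⟩ with hq0def
  have hrow0 : ∃ r : Fin n, ∀ y, p r y = 0 := by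
    by_contra h
    push_neg at h
    have h1 : ∀ x : Fin n, 1 ≤ ∑ y, p x y := by
      intro x
      obtain ⟨y, hy⟩ := h x
      have : 1 ≤ p x y := by omega
      exact le_trans this (Finset.single_le_sum (fun _ _ => Nat.zero_le _) (mem_univ y))
    have h2 : (n : ℕ) ≤ ∑ x, ∑ y, p x y := by
      calc (n : ℕ) = ∑ _x : Fin n, 1 := by simp
        _ ≤ ∑ x, ∑ y, p x y := Finset.sum_le_sum (fun x _ => h1 x)
    omega
  obtain ⟨r, hr⟩ := hrow0
  have hc0ex : ∃ c0, q0 r c0 = 1 := by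
    by_contra h
    push_neg at h
    have h0 : ∑ y, q0 r y = 0 :=
      Finset.sum_eq_zero (fun y _ => by have := q0e r y; have := h y; omega)
    have := q0r r
    omega
  obtain ⟨c0, hc0⟩ := hc0ex
  have hprc0 : p r c0 = 0 := hr c0
  have hq0col : ∀ x, x ≠ r → q0 x c0 = 0 := by
    intro x hx
    by_contra h
    have h2 : ∑ i ∈ ({x, r} : Finset (Fin n)), q0 i c0 ≤ ∑ i, q0 i c0 :=
      Finset.sum_le_sum_of_subset (Finset.subset_univ _)
    rw [Finset.sum_pair hx] at h2
    have := q0c c0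
    omega
  -- choose the entry (a, b) of p to delete
  obtain ⟨a, b, hab1, hab2, har, habc0⟩ : ∃ a b, p a b = 1 ∧ q0 a b = 0 ∧ a ≠ r ∧
      (∀ x, x ≠ r → ¬(x = a ∧ c0 = b) → p x c0 = 0) := by
    by_cases hcase : ∃ a, p a c0 = 1
    · obtain ⟨a, ha⟩ := hcase
      have har : a ≠ r := fun h => by rw [h, hprc0] at ha; exact absurd ha (by omega)
      refine ⟨a, c0, ha, hq0col a har, har, ?_⟩
      intro x hxr hx
      have hxa : x ≠ a := fun h => hx ⟨h, rfl⟩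
      by_contra h
      have h2 : ∑ i ∈ ({x, a} : Finset (Fin n)), p i c0 ≤ ∑ i, p i c0 :=
        Finset.sum_le_sum_of_subset (Finset.subset_univ _)
      rw [Finset.sum_pair hxa] at h2
      have := pc c0
      omega
    · push_neg at hcase
      have hcol0 : ∀ x, p x c0 = 0 := fun x => by have := pe x c0; have := hcase x; omega
      set F : Finset (Fin n × Fin n) := univ.filter (fun z => p z.1 z.2 = 1) with hF
      set C : Finset (Fin n × Fin n) :=
        univ.filter (fun z => p z.1 z.2 = 1 ∧ q0 z.1 z.2 = 1) with hC
      have hCcard : C.card = l := hcommon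
      have hFcard : F.card = n - 1 := by
        have h1 : F.card = ∑ z : Fin n × Fin n, (if p z.1 z.2 = 1 then 1 else 0) := by
          rw [hF, Finset.card_filter]
        have h2 : ∀ z : Fin n × Fin n, (if p z.1 z.2 = 1 then 1 else 0) = p z.1 z.2 := by
          intro z; have := pe z.1 z.2; split <;> omega
        rw [Finset.sum_congr rfl (fun z _ => h2 z)] at h1
        rw [← Finset.univ_product_univ, Finset.sum_product] at h1
        dsimp only at h1
        omega
      have hCF : ¬ F ⊆ C := by
        intro h
        have := Finset.card_le_card h
        omega
      obtain ⟨z, hzF, hzC⟩ := Finset.not_subset.1 hCF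
      rw [hF, mem_filter] at hzF
      rw [hC, mem_filter] at hzC
      have hpz : p z.1 z.2 = 1 := hzF.2
      have hqz : q0 z.1 z.2 = 0 := by
        have := q0e z.1 z.2
        by_contra h
        exact hzC ⟨mem_univ z, hpz, by omega⟩
      have hzr : z.1 ≠ r := fun h => by rw [h, hr z.2] at hpz; exact absurd hpz (by omega)
      exact ⟨z.1, z.2, hpz, hqz, hzr, fun x _ _ => hcol0 x⟩
  have hrc0ab : (r, c0) ≠ (a, b) := fun h => har (congrArg Prod.fst h).symm
  -- define p'
  set p' : Matrix (Fin n) (Fin n) ℕ :=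
    (fun x y => if x = r ∧ y = c0 then 1 else if x = a ∧ y = b then 0 else p x y :
      Matrix (Fin n) (Fin n) ℕ) with hp'def
  have hp'rc0 : p' r c0 = 1 := by simp [hp'def]
  have hp'ab : p' a b = 0 := by
    have : ¬(a = r ∧ b = c0) := fun h => har h.1
    simp [hp'def, this]
  have hp'ab2 : ∀ x y, x = a ∧ y = b → p' x y = 0 := by
    rintro x y ⟨rfl, rfl⟩; exact hp'ab
  have hp'other : ∀ x y, ¬(x = r ∧ y = c0) → ¬(x = a ∧ y = b) → p' x y = p x y := by
    intro x y h1 h2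
    simp [hp'def, h1, h2]
  have hp'e : ∀ x y, p' x y ≤ 1 := by
    intro x y
    simp only [hp'def]
    split
    · omega
    split
    · omega
    · exact pe x y
  -- row sums of p'
  have hp'rowr : ∀ y, p' r y = if y = c0 then 1 else 0 := by
    intro y
    by_cases h : y = c0
    · subst h; simp [hp'rc0]
    · rw [hp'other r y (fun hc => h hc.2) (fun hc => har hc.1.symm), hr y, if_neg h]
  have hp'r : ∀ x, ∑ y, p' x y ≤ 1 := by
    intro x
    by_cases hx : x = r
    · subst hx
      rw [Finset.sum_congr rfl (fun y _ => hp'rowr y)]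
      simp
    · have hle : ∀ y, p' x y ≤ p x y := by
        intro y
        by_cases h2 : x = a ∧ y = b
        · rw [hp'ab2 x y h2]
          omega
        · rw [hp'other x y (fun hc => hx hc.1) h2]
      exact le_trans (Finset.sum_le_sum (fun y _ => hle y)) (pr x)
  -- column sums of p'
  have hp'colc0 : ∀ x, p' x c0 = if x = r then 1 else 0 := by
    intro x
    by_cases h : x = r
    · subst h; simp [hp'rc0]
    · rw [if_neg h]
      by_cases h2 : x = a ∧ c0 = b
      · rw [hp'ab2 x c0 h2]
      · rw [hp'other x c0 (fun hc => h hc.1) (fun hc => h2 ⟨hc.1, hc.2.symm ▸ rfl⟩)]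
        · exact habc0 x h h2
  have hp'c : ∀ y, ∑ x, p' x y ≤ 1 := by
    intro y
    by_cases hy : y = c0
    · subst hy
      rw [Finset.sum_congr rfl (fun x _ => hp'colc0 x)]
      simp
    · have hle : ∀ x, p' x y ≤ p x y := by
        intro x
        by_cases h2 : x = a ∧ y = b
        · rw [hp'ab2 x y h2]
          omega
        · rw [hp'other x y (fun hc => hy hc.2) h2]
      exact le_trans (Finset.sum_le_sum (fun x _ => hle x)) (pc y)
  -- total sum of p'
  have hsplit : ∀ (f : Fin n × Fin n → ℕ),
      ∑ z, f z = f (a, b) + (f (r, c0) + ∑ z ∈ (univ.erase (a, b)).erase (r, c0), f z) := by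
    intro f
    rw [Finset.add_sum_erase _ f (Finset.mem_erase.2 ⟨hrc0ab, mem_univ _⟩),
      Finset.add_sum_erase _ f (mem_univ (a, b))]
  have hp'tot : (∑ x, ∑ y, p' x y) + 1 = n := by
    have h1 : ∑ x, ∑ y, p' x y = ∑ z : Fin n × Fin n, p' z.1 z.2 := by
      rw [← Finset.univ_product_univ, Finset.sum_product]
    have h2 : ∑ x, ∑ y, p x y = ∑ z : Fin n × Fin n, p z.1 z.2 := by
      rw [← Finset.univ_product_univ, Finset.sum_product]
    have h3 := hsplit (fun z => p' z.1 z.2)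
    have h4 := hsplit (fun z => p z.1 z.2)
    simp only at h3 h4
    have h5 : ∑ z ∈ (univ.erase (a, b)).erase (r, c0), p' z.1 z.2
        = ∑ z ∈ (univ.erase (a, b)).erase (r, c0), p z.1 z.2 := by
      apply Finset.sum_congr rfl
      intro z hz
      rw [Finset.mem_erase, Finset.mem_erase] at hz
      apply hp'other
      · intro hc; exact hz.1 (Prod.ext hc.1 hc.2)
      · intro hc; exact hz.2.1 (Prod.ext hc.1 hc.2)
    rw [hp'rc0] at h3
    rw [hp'ab] at h3
    rw [hprc0, hab1] at h4
    omega
  -- common ones of p' with q0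
  have hCommon' : commonOnes p' q0 = l + 1 := by
    have hset : univ.filter (fun z : Fin n × Fin n => p' z.1 z.2 = 1 ∧ q0 z.1 z.2 = 1)
        = insert (r, c0) (univ.filter (fun z : Fin n × Fin n => p z.1 z.2 = 1 ∧ q0 z.1 z.2 = 1)) := by
      ext z
      simp only [mem_filter, mem_insert, mem_univ, true_and]
      constructor
      · rintro ⟨h1, h2⟩
        by_cases hz1 : z = (r, c0)
        · exact Or.inl hz1
        · right
          have hz2 : z ≠ (a, b) := by
            rintro rfl
            rw [hp'ab] at h1
            omega
          rw [hp'other z.1 z.2 (fun hc => hz1 (Prod.ext hc.1 hc.2))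
            (fun hc => hz2 (Prod.ext hc.1 hc.2))] at h1
          exact ⟨h1, h2⟩
      · rintro (rfl | ⟨h1, h2⟩)
        · exact ⟨hp'rc0, hc0⟩
        · have hz1 : z ≠ (r, c0) := by
            rintro rfl
            rw [hprc0] at h1
            omega
          have hz2 : z ≠ (a, b) := by
            rintro rfl
            rw [hab2] at h2
            omega
          rw [hp'other z.1 z.2 (fun hc => hz1 (Prod.ext hc.1 hc.2))
            (fun hc => hz2 (Prod.ext hc.1 hc.2))]
          exact ⟨h1, h2⟩
    have hnotmem : (r, c0) ∉
        univ.filter (fun z : Fin n × Fin n => p z.1 z.2 = 1 ∧ q0 z.1 z.2 = 1) := by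
      simp only [mem_filter]
      rintro ⟨-, h1, -⟩
      rw [hprc0] at h1
      omega
    have hcc : commonOnes p q0 = l := hcommon
    unfold commonOnes at hcc ⊢
    rw [hset, Finset.card_insert_of_notMem hnotmem, hcc]
  -- choose jj
  obtain ⟨jj, hjj2, hjjH⟩ : ∃ jj : Fin k, 2 ≤ (jj : ℕ) ∧
      1 ≤ m ⟨0, h0k⟩ r c0 + m ⟨1, h1k⟩ r c0 + m jj r c0 := by
    by_cases hI : 1 ≤ m ⟨0, h0k⟩ r c0 + m ⟨1, h1k⟩ r c0
    · exact ⟨⟨2, by omega⟩, by simp, by omega⟩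
    · push_neg at hI
      have hsum_rc0 : ∑ i, m i r c0 = ∑ i, q i r c0 := by
        have h1 := congrFun (congrFun hsum r) c0
        simpa [Matrix.sum_apply] using h1
      have hge1 : 1 ≤ ∑ i, q i r c0 := by
        have : 1 ≤ q ⟨0, h0k⟩ r c0 := by rw [← hq0def]; omega
        exact le_trans this (Finset.single_le_sum (f := fun i : Fin k => q i r c0)
          (fun _ _ => Nat.zero_le _) (mem_univ (⟨0, h0k⟩ : Fin k)))
      have hex : ∃ i, 1 ≤ m i r c0 := by
        by_contra h
        push_neg at h
        have : ∑ i, m i r c0 = 0 := Finset.sum_eq_zero (fun i _ => by have := h i; omega)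
        omega
      obtain ⟨i, hi⟩ := hex
      have hival : 2 ≤ (i : ℕ) := by
        by_contra h
        push_neg at h
        interval_cases hiv : (i : ℕ)
        · have : i = ⟨0, h0k⟩ := Fin.ext hiv
          rw [this] at hi
          omega
        · have : i = ⟨1, h1k⟩ := Fin.ext hiv
          rw [this] at hi
          omega
      exact ⟨i, hival, by omega⟩
  -- the 3-regular matrix H
  obtain ⟨m0e, m0r, m0c⟩ := hm ⟨0, h0k⟩
  obtain ⟨m1e, m1r, m1c⟩ := hm ⟨1, h1k⟩
  obtain ⟨mje, mjr, mjc⟩ := hm jj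
  set H : Matrix (Fin n) (Fin n) ℕ :=
    (fun x y => m ⟨0, h0k⟩ x y + m ⟨1, h1k⟩ x y + m jj x y : Matrix (Fin n) (Fin n) ℕ)
    with hHdef
  have hHr : ∀ x, ∑ y, H x y = 3 := by
    intro x
    simp only [hHdef]
    rw [Finset.sum_add_distrib, Finset.sum_add_distrib, m0r x, m1r x, mjr x]
  have hHc : ∀ y, ∑ x, H x y = 3 := by
    intro y
    simp only [hHdef]
    rw [Finset.sum_add_distrib, Finset.sum_add_distrib, m0c y, m1c y, mjc y]
  have hp'H : ∀ x y, p' x y ≤ H x y := by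
    intro x y
    by_cases h1 : x = r ∧ y = c0
    · obtain ⟨rfl, rfl⟩ := h1
      rw [hp'rc0]
      simpa [hHdef] using hjjH
    · by_cases h2 : x = a ∧ y = b
      · rw [hp'ab2 x y h2]
        omega
      · rw [hp'other x y h1 h2]
        have := hple x y
        simp only [Matrix.add_apply] at this
        simp only [hHdef]
        omega
  -- find the perfect matching mj' inside H - p'
  obtain ⟨σj, hσj⟩ := exists_perm_of_hall (fun x y => H x y - p' x y)
    (by
      intro y
      have h1 : ∑ x, (H x y - p' x y + p' x y) = ∑ x, H x y :=
        Finset.sum_congr rfl (fun x _ => by have := hp'H x y; omega)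
      rw [Finset.sum_add_distrib, hHc y] at h1
      have := hp'c y
      omega)
    (by
      intro T
      have hGrow : ∀ x, (∑ y, (H x y - p' x y)) + ∑ y, p' x y = 3 := by
        intro x
        have h1 : ∑ y, (H x y - p' x y + p' x y) = ∑ y, H x y :=
          Finset.sum_congr rfl (fun y _ => by have := hp'H x y; omega)
        rw [Finset.sum_add_distrib, hHr x] at h1
        omega
      have hT1 : (∑ x ∈ T, ∑ y, (H x y - p' x y)) + ∑ x ∈ T, ∑ y, p' x y
          = 3 * T.card := by
        rw [← Finset.sum_add_distrib, Finset.sum_congr rfl (fun x _ => hGrow x),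
          Finset.sum_const]
        ring
      have hT2 : (∑ x ∈ T, ∑ y, p' x y) + ∑ x ∈ Tᶜ, ∑ y, p' x y = ∑ x, ∑ y, p' x y :=
        Finset.sum_add_sum_compl T _
      have hT3 : ∑ x ∈ Tᶜ, ∑ y, p' x y ≤ Tᶜ.card := by
        calc ∑ x ∈ Tᶜ, ∑ y, p' x y ≤ ∑ _x ∈ Tᶜ, 1 :=
              Finset.sum_le_sum (fun x _ => hp'r x)
          _ = Tᶜ.card := by simp
      have hT4 : T.card + Tᶜ.card = n := by
        rw [Finset.card_add_card_compl]
        simp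
      omega)
  set mj' : Matrix (Fin n) (Fin n) ℕ := permMat σj with hmj'def
  have hmj'perm : IsPermMatrix mj' := permMat_isPerm σj
  obtain ⟨mj'e, mj'r, mj'c⟩ := hmj'perm
  have hmj'le : ∀ x y, mj' x y + p' x y ≤ H x y := by
    intro x y
    by_cases h : x = σj y
    · have h1 := hσj y
      rw [← h] at h1
      have h2 : mj' x y = 1 := by simp [hmj'def, permMat, h]
      have := hp'H x y
      omega
    · have h2 : mj' x y = 0 := by simp [hmj'def, permMat, h]
      have := hp'H x y
      omega
  -- decompose H - mj' into two permutation matrices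
  obtain ⟨u, v, hu, hv, huv⟩ := decompose2 (fun x y => H x y - mj' x y)
    (by
      intro x
      have h1 : ∑ y, (H x y - mj' x y + mj' x y) = ∑ y, H x y :=
        Finset.sum_congr rfl (fun y _ => by have := hmj'le x y; omega)
      rw [Finset.sum_add_distrib, hHr x, mj'r x] at h1
      omega)
    (by
      intro y
      have h1 : ∑ x, (H x y - mj' x y + mj' x y) = ∑ x, H x y :=
        Finset.sum_congr rfl (fun x _ => by have := hmj'le x y; omega)
      rw [Finset.sum_add_distrib, hHc y, mj'c y] at h1
      omega)
  refine ⟨jj, hjj2, u, v, mj', p', hu, hv, ⟨mj'e, mj'r, mj'c⟩,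
    ⟨hp'e, hp'r, hp'c, hp'tot⟩, ?_, ?_, hCommon'⟩
  · funext x y
    have h1 : (u + v) x y = H x y - mj' x y := by rw [← huv]
    have h2 := hmj'le x y
    show (m ⟨0, h0k⟩ + m ⟨1, h1k⟩ + m jj) x y = (u + v + mj') x y
    simp only [Matrix.add_apply] at h1 ⊢
    simp only [hHdef] at h1 h2
    omega
  · intro x y
    have h1 : (u + v) x y = H x y - mj' x y := by rw [← huv]
    have h2 := hmj'le x y
    omega
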